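/- Let θ = Θ_S ∘ Λ_{π,t} be an automorphism of B_k, where S ⊆ {1,…,k}, π is a permutation of {1,…,k}, and 0 ≤ t < r. Then there exists a permutation σ_θ of {1,…,2^k} such that for every a ∈ B_k and every 1 ≤ i ≤ 2^k, (Φ_k(θ(a)))_i = ((Φ_k(a))_{σ_θ^{−1}(i)})^{p^t}; that is, the conjugate Φ_k ∘ θ ∘ Φ_k^{−1} is a coordinate permutation of F_{p^r}^{2^k} composed with the entrywise Frobenius power α ↦ α^{p^t}. -/

import Mathlib

open MvPolynomial

set_option synthInstance.maxHeartbeats 400000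
set_option maxHeartbeats 1000000

noncomputable def relIdeal (p r k : ℕ) [Fact p.Prime] : Ideal (MvPolynomial (Fin k) (GaloisField p r)) :=
  Ideal.span (Set.range fun i : Fin k => X i ^ 2 - X i)

abbrev B (p r k : ℕ) [Fact p.Prime] :=
  MvPolynomial (Fin k) (GaloisField p r) ⧸ relIdeal p r k

noncomputable def v (p r k : ℕ) [Fact p.Prime] (i : Fin k) : B p r k :=
  Ideal.Quotient.mk _ (X i)

lemma v_idem (p r k : ℕ) [Fact p.Prime] (i : Fin k) : v p r k i ^ 2 = v p r k i := by
  have h : (X i ^ 2 - X i : MvPolynomial (Fin k) (GaloisField p r)) ∈ relIdeal p r k :=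
    Ideal.subset_span ⟨i, rfl⟩
  have h2 := (Ideal.Quotient.eq_zero_iff_mem).mpr h
  rw [map_sub, map_pow] at h2
  have h3 := sub_eq_zero.mp h2
  simpa [v] using h3

lemma one_sub_v_idem (p r k : ℕ) [Fact p.Prime] (i : Fin k) :
    (1 - v p r k i) ^ 2 = 1 - v p r k i := by
  have h : (1 - v p r k i) ^ 2 = 1 - 2 * v p r k i + v p r k i ^ 2 := by ring
  rw [h, v_idem]; ring

noncomputable def ThAux (p r k : ℕ) [Fact p.Prime] (S : Finset (Fin k)) :
    MvPolynomial (Fin k) (GaloisField p r) →+* B p r k :=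
  (aeval (fun i : Fin k => if i ∈ S then 1 - v p r k i else v p r k i)).toRingHom

lemma ThAux_cond (p r k : ℕ) [Fact p.Prime] (S : Finset (Fin k)) :
    relIdeal p r k ≤ RingHom.ker (ThAux p r k S) := by
  refine Ideal.span_le.mpr ?_
  rintro _ ⟨i, rfl⟩
  simp only [SetLike.mem_coe, RingHom.mem_ker, ThAux, AlgHom.toRingHom_eq_coe,
    RingHom.coe_coe, map_sub, map_pow, aeval_X]
  by_cases h : i ∈ S
  · rw [if_pos h, one_sub_v_idem, sub_self]
  · rw [if_neg h, v_idem, sub_self]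

/-- The automorphism `Θ_S` of `B_k`, determined by `v_i ↦ 1 - v_i` for `i ∈ S` and
`v_i ↦ v_i` otherwise, fixing `F_{p^r}` pointwise. -/
noncomputable def Th (p r k : ℕ) [Fact p.Prime] (S : Finset (Fin k)) :
    B p r k →+* B p r k :=
  Ideal.Quotient.lift (relIdeal p r k) (ThAux p r k S) (fun _ ha => ThAux_cond p r k S ha)

noncomputable def LamAux (p r k : ℕ) [Fact p.Prime] (π : Equiv.Perm (Fin k)) (t : ℕ) :
    MvPolynomial (Fin k) (GaloisField p r) →+* B p r k :=
  eval₂Hom ((Ideal.Quotient.mk (relIdeal p r k)).comp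
      ((C : GaloisField p r →+* MvPolynomial (Fin k) (GaloisField p r)).comp
        (iterateFrobenius (GaloisField p r) p t)))
    (fun i => v p r k (π i))

lemma LamAux_cond (p r k : ℕ) [Fact p.Prime] (π : Equiv.Perm (Fin k)) (t : ℕ) :
    relIdeal p r k ≤ RingHom.ker (LamAux p r k π t) := by
  refine Ideal.span_le.mpr ?_
  rintro _ ⟨i, rfl⟩
  simp only [SetLike.mem_coe, RingHom.mem_ker, LamAux, map_sub, map_pow, eval₂Hom_X']
  rw [v_idem, sub_self]

/-- The automorphism `Λ_{π,t}` of `B_k`, acting on `F_{p^r}` as the Frobenius power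
`α ↦ α^{p^t}` and sending `v_i ↦ v_{π(i)}`. -/
noncomputable def Lam (p r k : ℕ) [Fact p.Prime] (π : Equiv.Perm (Fin k)) (t : ℕ) :
    B p r k →+* B p r k :=
  Ideal.Quotient.lift (relIdeal p r k) (LamAux p r k π t) (fun _ ha => LamAux_cond p r k π t ha)

noncomputable def PhiAux (p r k : ℕ) [Fact p.Prime] :
    MvPolynomial (Fin k) (GaloisField p r) →+* (Fin (2 ^ k) → GaloisField p r) :=
  Pi.ringHom fun j =>
    eval₂Hom (RingHom.id (GaloisField p r))
      (fun i : Fin k => if Nat.testBit (j : ℕ) (i : ℕ) then 1 else 0)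

lemma PhiAux_cond (p r k : ℕ) [Fact p.Prime] :
    relIdeal p r k ≤ RingHom.ker (PhiAux p r k) := by
  refine Ideal.span_le.mpr ?_
  rintro _ ⟨i, rfl⟩
  simp only [SetLike.mem_coe, RingHom.mem_ker, PhiAux]
  funext j
  change (eval₂Hom (RingHom.id (GaloisField p r))
      (fun i : Fin k => if Nat.testBit (j : ℕ) (i : ℕ) then (1 : GaloisField p r) else 0))
      (X i ^ 2 - X i) = 0
  simp only [map_sub, map_pow, eval₂Hom_X']
  by_cases h : Nat.testBit (j : ℕ) (i : ℕ) <;> simp [h]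

/-- The Gray map `Φ_k : B_k → F_{p^r}^{2^k}`: the coordinate indexed by `j` is the
evaluation of (a representative of) an element of `B_k` at the point whose `i`-th
coordinate is the `i`-th binary digit of `j`.  This agrees with the recursive
definition `Φ_k(α + β v_k) = (Φ_{k-1}(α), Φ_{k-1}(α + β))`, `Φ_0 = id`. -/
noncomputable def Phi (p r k : ℕ) [Fact p.Prime] :
    B p r k →+* (Fin (2 ^ k) → GaloisField p r) :=
  Ideal.Quotient.lift (relIdeal p r k) (PhiAux p r k) (fun _ ha => PhiAux_cond p r k ha)

/-- The equivalence between `Fin (2^k)` and binary strings of length `k`, via `Nat.testBit`. -/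
noncomputable def bitEquiv (k : ℕ) : Fin (2 ^ k) ≃ (Fin k → Bool) :=
  Equiv.ofBijective (fun (j : Fin (2 ^ k)) (i : Fin k) => Nat.testBit (j : ℕ) (i : ℕ)) <| by
  rw [Fintype.bijective_iff_injective_and_card]
  constructor
  · intro a b h
    apply Fin.ext
    apply Nat.eq_of_testBit_eq
    intro i
    by_cases hi : i < k
    · exact congrFun h ⟨i, hi⟩
    · rw [Nat.testBit_eq_false_of_lt, Nat.testBit_eq_false_of_lt] <;>
        exact lt_of_lt_of_le (Fin.is_lt _) (Nat.pow_le_pow_right (by norm_num) (le_of_not_gt hi))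
  · simp

lemma bitEquiv_symm_testBit (k : ℕ) (g : Fin k → Bool) (i : Fin k) :
    Nat.testBit ((bitEquiv k).symm g : ℕ) (i : ℕ) = g i :=
  congrFun ((bitEquiv k).apply_symm_apply g) i

/-- For `θ = Θ_S ∘ Λ_{π,t}` there is a permutation `σ_θ` of `{1,…,2^k}` such that
`Φ_k(θ(a))_i = (Φ_k(a)_{σ_θ⁻¹(i)})^{p^t}` for all `a ∈ B_k` and all `i`. -/
theorem stmt_13 (p r k : ℕ) [Fact p.Prime] (hr : 1 ≤ r)
    (S : Finset (Fin k)) (π : Equiv.Perm (Fin k)) (t : ℕ) (ht : t < r) :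
    ∃ σ : Equiv.Perm (Fin (2 ^ k)), ∀ (a : B p r k) (i : Fin (2 ^ k)),
      Phi p r k (Th p r k S (Lam p r k π t a)) i =
        Phi p r k a (σ.symm i) ^ p ^ t := by
  classical
  set F : (Fin k → Bool) ≃ (Fin k → Bool) :=
    { toFun := fun g m => xor (g (π m)) (decide (π m ∈ S))
      invFun := fun g m => xor (g (π.symm m)) (decide (m ∈ S))
      left_inv := by intro g; funext m; simp
      right_inv := by intro g; funext m; simp } with hF
  refine ⟨((bitEquiv k).trans (F.trans (bitEquiv k).symm)).symm, ?_⟩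
  intro a i
  have hσ : (((bitEquiv k).trans (F.trans (bitEquiv k).symm)).symm.symm i)
      = (bitEquiv k).symm (F (bitEquiv k i)) := rfl
  rw [hσ]
  obtain ⟨f, rfl⟩ := Ideal.Quotient.mk_surjective a
  have key :
      (Pi.evalRingHom (fun _ => GaloisField p r) i).comp
          (((Phi p r k).comp ((Th p r k S).comp (Lam p r k π t))).comp
            (Ideal.Quotient.mk (relIdeal p r k)))
      = (iterateFrobenius (GaloisField p r) p t).comp
          ((Pi.evalRingHom (fun _ => GaloisField p r)
              ((bitEquiv k).symm (F (bitEquiv k i)))).comp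
            ((Phi p r k).comp (Ideal.Quotient.mk (relIdeal p r k)))) := by
    apply MvPolynomial.ringHom_ext
    · intro c
      simp only [RingHom.comp_apply, Pi.evalRingHom_apply]
      rw [show (Lam p r k π t) (Ideal.Quotient.mk _ (C c)) = LamAux p r k π t (C c) from
        Ideal.Quotient.lift_mk _ _ _]
      simp only [LamAux, eval₂Hom_C, RingHom.comp_apply]
      rw [show (Th p r k S) (Ideal.Quotient.mk _ (C ((iterateFrobenius (GaloisField p r) p t) c)))
        = ThAux p r k S (C ((iterateFrobenius (GaloisField p r) p t) c)) from
        Ideal.Quotient.lift_mk _ _ _]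
      simp only [ThAux, AlgHom.toRingHom_eq_coe, RingHom.coe_coe, aeval_C]
      rw [show (algebraMap (GaloisField p r) (B p r k))
            ((iterateFrobenius (GaloisField p r) p t) c)
          = Ideal.Quotient.mk (relIdeal p r k) (C ((iterateFrobenius (GaloisField p r) p t) c))
          from rfl]
      rw [show ∀ q : MvPolynomial (Fin k) (GaloisField p r),
          (Phi p r k) (Ideal.Quotient.mk _ q) = PhiAux p r k q from
        fun q => Ideal.Quotient.lift_mk _ _ _,
        show (Phi p r k) (Ideal.Quotient.mk _ (C c)) = PhiAux p r k (C c) from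
        Ideal.Quotient.lift_mk _ _ _]
      simp [PhiAux, Pi.ringHom]
    · intro m
      simp only [RingHom.comp_apply, Pi.evalRingHom_apply]
      rw [show (Lam p r k π t) (Ideal.Quotient.mk _ (X m)) = LamAux p r k π t (X m) from
        Ideal.Quotient.lift_mk _ _ _]
      simp only [LamAux, eval₂Hom_X']
      rw [show (Th p r k S) (v p r k (π m)) = ThAux p r k S (X (π m)) from
        Ideal.Quotient.lift_mk _ _ _]
      simp only [ThAux, AlgHom.toRingHom_eq_coe, RingHom.coe_coe, aeval_X]
      rw [show (Phi p r k) (Ideal.Quotient.mk _ (X m)) = PhiAux p r k (X m) from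
        Ideal.Quotient.lift_mk _ _ _]
      have hbit : Nat.testBit (((bitEquiv k).symm (F (bitEquiv k i)) : Fin (2 ^ k)) : ℕ) (m : ℕ)
          = xor (Nat.testBit (i : ℕ) ((π m : Fin k) : ℕ)) (decide (π m ∈ S)) := by
        rw [bitEquiv_symm_testBit]
        rfl
      by_cases hS : π m ∈ S
      · have h1 : (1 : B p r k) - v p r k (π m)
            = Ideal.Quotient.mk (relIdeal p r k) (1 - X (π m)) := by
          simp [v]
        rw [if_pos hS, h1,
          show (Phi p r k) (Ideal.Quotient.mk _ ((1 : MvPolynomial (Fin k) (GaloisField p r))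
            - X (π m))) = PhiAux p r k (1 - X (π m)) from Ideal.Quotient.lift_mk _ _ _]
        simp only [PhiAux, Pi.ringHom, Pi.ringHom_apply, map_sub, map_one, eval₂Hom_X', hbit, hS,
          Bool.xor_true, iterateFrobenius_def]
        have hpt : p ^ t ≠ 0 := pow_ne_zero t (Nat.Prime.ne_zero Fact.out)
        by_cases hb : Nat.testBit (i : ℕ) ((π m : Fin k) : ℕ) <;>
          simp [hb, one_pow, zero_pow hpt]
      · rw [if_neg hS, show v p r k (π m)
            = Ideal.Quotient.mk (relIdeal p r k) (X (π m)) from rfl,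
          show (Phi p r k) (Ideal.Quotient.mk _ (X (π m))) = PhiAux p r k (X (π m)) from
          Ideal.Quotient.lift_mk _ _ _]
        simp only [PhiAux, Pi.ringHom, Pi.ringHom_apply, eval₂Hom_X', hbit, hS,
          Bool.xor_false, iterateFrobenius_def]
        have hpt : p ^ t ≠ 0 := pow_ne_zero t (Nat.Prime.ne_zero Fact.out)
        by_cases hb : Nat.testBit (i : ℕ) ((π m : Fin k) : ℕ) <;>
          simp [hb, one_pow, zero_pow hpt]
  have := congrArg (fun φ => φ f) key
  simpa [iterateFrobenius_def] using this
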